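/- For every real α, the linear operators E, F, H on the real vector space of finitely supported real-valued functions on the set of strict partitions, defined on the basis vectors ε_λ by E ε_λ = Σ_{x∈X(λ)} 2^{−δ(x,0)} (x(x+1)+α) ε_{λ+□(x)}, F ε_λ = −Σ_{y∈Y(λ)} ε_{λ−□(y)}, H ε_λ = (α/2 + 2|λ|) ε_λ, satisfy the sl(2) commutation relations [E, H] = −2E, [F, H] = 2F, [E, F] = H, where [A, B] = AB − BA and δ(x,0) is the Kronecker delta. -/

import Mathlib

open Finset

/-- A strict partition is encoded as the finite set of its (distinct, positive) parts:
`S` is a strict partition iff `0 ∉ S`. -/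
def IsStrictPartition (S : Finset ℕ) : Prop := 0 ∉ S

/-- The weight `|λ|` of a strict partition: the sum of its parts. -/
def wt (S : Finset ℕ) : ℕ := ∑ a ∈ S, a

/-- The length `ℓ(λ)` of a strict partition: its number of parts. -/
def len (S : Finset ℕ) : ℕ := S.card

/-- The set `X(λ)` of addable contents of the strict partition `λ`:
the contents `x` of boxes that can be added to the shifted Young diagram.
A part `a ∈ S` gives the addable content `a` iff `a + 1` is not a part, and `0` is an
addable content iff `1` is not a part (i.e. `λ` is empty or its smallest part is `≥ 2`). -/
def Xset (S : Finset ℕ) : Finset ℕ :=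
  (S.filter (fun x => x + 1 ∉ S)) ∪ (if 1 ∉ S then {0} else ∅)

/-- The set `Y(λ)` of removable contents of the strict partition `λ`:
`y ∈ Y(λ)` iff `y + 1` is a part and `y` is not a part. -/
def Yset (S : Finset ℕ) : Finset ℕ :=
  (S.filter (fun p => p - 1 ∉ S)).image (fun p => p - 1)

/-- `λ + □(x)`: add to `λ` the box of content `x ∈ X(λ)`. -/
def addBox (S : Finset ℕ) (x : ℕ) : Finset ℕ :=
  if x = 0 then insert 1 S else insert (x + 1) (S.erase x)

/-- `λ − □(y)`: remove from `λ` the box of content `y ∈ Y(λ)`. -/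
def removeBox (S : Finset ℕ) (y : ℕ) : Finset ℕ :=
  if y = 0 then S.erase 1 else insert y (S.erase (y + 1))

/-- `c(c+1)` as a real number. -/
def cc (t : ℕ) : ℝ := t * (t + 1)

/-- The number `h(λ)` of standard shifted tableaux (with the doubled-edge convention):
`h(λ) = 2^{|λ|−ℓ(λ)} |λ|!/(λ_1!⋯λ_ℓ!) ∏_{i<j} (λ_i−λ_j)/(λ_i+λ_j)`. -/
noncomputable def hfun (S : Finset ℕ) : ℝ :=
  2 ^ (wt S - len S) * (Nat.factorial (wt S) : ℝ) / (∏ a ∈ S, (Nat.factorial a : ℝ)) *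
    ∏ p ∈ S.offDiag.filter (fun p => p.2 < p.1), (((p.1 : ℝ) - p.2) / ((p.1 : ℝ) + p.2))

/-- The partial fraction coefficients `θ↑_x(λ)`, `x ∈ X(λ)`. -/
noncomputable def thetaUp (S : Finset ℕ) (xh : ℕ) : ℝ :=
  if xh = 0 then (∏ y ∈ Yset S, cc y) / (∏ x ∈ (Xset S).erase 0, cc x)
  else (∏ y ∈ Yset S, (cc xh - cc y)) /
    (cc xh * ∏ x ∈ ((Xset S).erase 0).erase xh, (cc xh - cc x))

/-- The partial fraction coefficients `θ↓_y(λ)`, `y ∈ Y(λ)`. -/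
noncomputable def thetaDown (S : Finset ℕ) (yh : ℕ) : ℝ :=
  (∏ x ∈ (Xset S).erase 0, (cc yh - cc x)) / (∏ y ∈ (Yset S).erase yh, (cc yh - cc y))

/-- `Z_α(n) = α(α+2)⋯(α+2n−2)`. -/
noncomputable def Zfun (α : ℝ) (n : ℕ) : ℝ := ∏ k ∈ Finset.range n, (α + 2 * k)

/-- The multiplicative measure weight
`M_n^α(λ) = (h(λ)² 2^{ℓ−n}/n!) ⬝ ∏_{□∈λ}(c(□)(c(□)+1)+α) / Z_α(n)`. -/
noncomputable def Mw (α : ℝ) (n : ℕ) (S : Finset ℕ) : ℝ :=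
  hfun S ^ 2 * 2 ^ len S / 2 ^ n / (Nat.factorial n : ℝ) *
    (∏ p ∈ S, ∏ c ∈ Finset.range p, (cc c + α)) / Zfun α n

/-- The type of strict partitions. -/
def SP : Type := {S : Finset ℕ // 0 ∉ S}

instance : DecidableEq SP := inferInstanceAs (DecidableEq {S : Finset ℕ // 0 ∉ S})

/-- Adding a box to a strict partition yields a strict partition. -/
def addBoxSP (lam : SP) (x : ℕ) : SP :=
  ⟨addBox lam.1 x, by
    have h0 := lam.2
    unfold addBox
    split_ifs <;> simp [Finset.mem_insert, Finset.mem_erase, h0]⟩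

/-- Removing a box from a strict partition yields a strict partition. -/
def removeBoxSP (lam : SP) (y : ℕ) : SP :=
  ⟨removeBox lam.1 y, by
    have h0 := lam.2
    unfold removeBox
    split_ifs with h
    · simp [Finset.mem_erase, h0]
    · simp [Finset.mem_insert, Finset.mem_erase, h0, Ne.symm h]⟩

/-- `E ε_λ = ∑_{x∈X(λ)} 2^{−δ(x,0)} (x(x+1)+α) ε_{λ+□(x)}`. -/
noncomputable def Evec (α : ℝ) (lam : SP) : SP →₀ ℝ :=
  ∑ x ∈ Xset lam.1,
    ((if x = 0 then (2 : ℝ)⁻¹ else 1) * (cc x + α)) • Finsupp.single (addBoxSP lam x) 1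

/-- `F ε_λ = −∑_{y∈Y(λ)} ε_{λ−□(y)}`. -/
noncomputable def Fvec (lam : SP) : SP →₀ ℝ :=
  -∑ y ∈ Yset lam.1, Finsupp.single (removeBoxSP lam y) (1 : ℝ)

/-- `H ε_λ = (α/2 + 2|λ|) ε_λ`. -/
noncomputable def Hvec (α : ℝ) (lam : SP) : SP →₀ ℝ :=
  Finsupp.single lam (α / 2 + 2 * (wt lam.1 : ℝ))

/-- The operator `E`, defined on basis vectors by linear extension. -/
noncomputable def Eop (α : ℝ) (f : SP →₀ ℝ) : SP →₀ ℝ := f.sum fun lam r => r • Evec α lam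

/-- The operator `F`, defined on basis vectors by linear extension. -/
noncomputable def Fop (f : SP →₀ ℝ) : SP →₀ ℝ := f.sum fun lam r => r • Fvec lam

/-- The operator `H`, defined on basis vectors by linear extension. -/
noncomputable def Hop (α : ℝ) (f : SP →₀ ℝ) : SP →₀ ℝ := f.sum fun lam r => r • Hvec α lam

variable {S : Finset ℕ} {x y n : ℕ}

lemma mem_Xset : x ∈ Xset S ↔ ((x ∈ S ∨ x = 0) ∧ x + 1 ∉ S) := by
  unfold Xset
  split_ifs with h1
  · simp only [union_empty, mem_filter]
    constructor
    · rintro ⟨hx, hx1⟩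
      exact ⟨Or.inl hx, hx1⟩
    · rintro ⟨hx | rfl, hx1⟩
      · exact ⟨hx, hx1⟩
      · exact absurd h1 hx1
  · simp only [mem_union, mem_filter, mem_singleton]
    constructor
    · rintro (⟨hx, hx1⟩ | rfl)
      · exact ⟨Or.inl hx, hx1⟩
      · exact ⟨Or.inr rfl, h1⟩
    · rintro ⟨hx | rfl, hx1⟩
      · exact Or.inl ⟨hx, hx1⟩
      · exact Or.inr rfl

lemma mem_Yset (h0 : 0 ∉ S) : y ∈ Yset S ↔ (y + 1 ∈ S ∧ y ∉ S) := by
  unfold Yset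
  simp only [mem_image, mem_filter]
  constructor
  · rintro ⟨p, ⟨hp, hp1⟩, rfl⟩
    have hp0 : p ≠ 0 := fun h => h0 (h ▸ hp)
    have : p - 1 + 1 = p := by omega
    rw [this]
    exact ⟨hp, hp1⟩
  · rintro ⟨h1, h2⟩
    exact ⟨y + 1, ⟨h1, by simpa using h2⟩, by omega⟩

lemma zero_not_mem_addBox (h0 : 0 ∉ S) : 0 ∉ addBox S x := by
  unfold addBox
  split_ifs <;> simp [mem_insert, mem_erase, h0]

lemma zero_not_mem_removeBox (h0 : 0 ∉ S) : 0 ∉ removeBox S y := by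
  unfold removeBox
  split_ifs with h
  · simp [mem_erase, h0]
  · simp [mem_insert, mem_erase, h0, Ne.symm h]

lemma mem_addBox (h0 : 0 ∉ S) (hx : x ∈ Xset S) :
    n ∈ addBox S x ↔ ((n ∈ S ∧ n ≠ x) ∨ n = x + 1) := by
  unfold addBox
  split_ifs with h
  · subst h
    simp only [mem_insert]
    constructor
    · rintro (rfl | hn)
      · exact Or.inr rfl
      · exact Or.inl ⟨hn, fun h => h0 (h ▸ hn)⟩
    · rintro (⟨hn, _⟩ | rfl)
      · exact Or.inr hn
      · exact Or.inl rfl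
  · simp only [mem_insert, mem_erase]
    tauto

lemma mem_removeBox (h0 : 0 ∉ S) (hy : y ∈ Yset S) :
    n ∈ removeBox S y ↔ ((n ∈ S ∧ n ≠ y + 1) ∨ (n = y ∧ y ≠ 0)) := by
  unfold removeBox
  split_ifs with h
  · subst h
    simp only [mem_erase]
    tauto
  · simp only [mem_insert, mem_erase]
    tauto

lemma wt_addBox (h0 : 0 ∉ S) (hx : x ∈ Xset S) : wt (addBox S x) = wt S + 1 := by
  rw [mem_Xset] at hx
  unfold addBox wt
  split_ifs with h
  · subst h
    rw [Finset.sum_insert hx.2]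
    omega
  · obtain ⟨hxS | rfl, hx1⟩ := hx
    · have hxne : x + 1 ∉ S.erase x := fun hm => hx1 (Finset.mem_of_mem_erase hm)
      rw [Finset.sum_insert hxne]
      have h2 : ∑ a ∈ S.erase x, a + x = ∑ a ∈ S, a := Finset.sum_erase_add S _ hxS
      omega
    · exact absurd rfl h

lemma wt_removeBox (h0 : 0 ∉ S) (hy : y ∈ Yset S) : wt (removeBox S y) + 1 = wt S := by
  rw [mem_Yset h0] at hy
  unfold removeBox wt
  split_ifs with h
  · subst h
    have h2 : ∑ a ∈ S.erase 1, a + 1 = ∑ a ∈ S, a := Finset.sum_erase_add S _ hy.1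
    omega
  · have hne : y ∉ S.erase (y + 1) := fun hm => hy.2 (Finset.mem_of_mem_erase hm)
    rw [Finset.sum_insert hne]
    have h2 : ∑ a ∈ S.erase (y + 1), a + (y + 1) = ∑ a ∈ S, a :=
      Finset.sum_erase_add S _ hy.1
    omega

lemma XY_ne (h0 : 0 ∉ S) (hx : x ∈ Xset S) (hy : y ∈ Yset S) : x ≠ y := by
  rw [mem_Xset] at hx
  rw [mem_Yset h0] at hy
  rintro rfl
  rcases hx.1 with h | rfl
  · exact hy.2 h
  · exact hx.2 hy.1

lemma self_mem_Yset_addBox (h0 : 0 ∉ S) (hx : x ∈ Xset S) : x ∈ Yset (addBox S x) := by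
  rw [mem_Yset (zero_not_mem_addBox h0), mem_addBox h0 hx, mem_addBox h0 hx]
  rw [mem_Xset] at hx
  constructor
  · exact Or.inr rfl
  · rintro (⟨_, h⟩ | h)
    · exact h rfl
    · omega

lemma self_mem_Xset_removeBox (h0 : 0 ∉ S) (hy : y ∈ Yset S) : y ∈ Xset (removeBox S y) := by
  rw [mem_Xset, mem_removeBox h0 hy, mem_removeBox h0 hy]
  rw [mem_Yset h0] at hy
  constructor
  · by_cases h : y = 0
    · exact Or.inr h
    · exact Or.inl (Or.inr ⟨rfl, h⟩)
  · rintro (⟨h, hne⟩ | ⟨h, _⟩)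
    · exact hne rfl
    · omega

lemma removeBox_addBox (h0 : 0 ∉ S) (hx : x ∈ Xset S) : removeBox (addBox S x) x = S := by
  ext n
  rw [mem_removeBox (zero_not_mem_addBox h0) (self_mem_Yset_addBox h0 hx), mem_addBox h0 hx]
  rw [mem_Xset] at hx
  constructor
  · rintro (⟨⟨hn, _⟩ | rfl, hne⟩ | ⟨rfl, hx0⟩)
    · exact hn
    · exact absurd rfl hne
    · rcases hx.1 with h | h
      · exact h
      · exact absurd h hx0
  · intro hn
    by_cases hnx : n = x
    · exact Or.inr ⟨hnx, fun h => h0 (h ▸ hnx ▸ hn)⟩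
    · exact Or.inl ⟨Or.inl ⟨hn, hnx⟩, fun h => hx.2 (h ▸ hn)⟩

lemma addBox_removeBox (h0 : 0 ∉ S) (hy : y ∈ Yset S) : addBox (removeBox S y) y = S := by
  ext n
  rw [mem_addBox (zero_not_mem_removeBox h0) (self_mem_Xset_removeBox h0 hy),
    mem_removeBox h0 hy]
  rw [mem_Yset h0] at hy
  constructor
  · rintro (⟨⟨hn, _⟩ | ⟨rfl, _⟩, hne⟩ | rfl)
    · exact hn
    · exact absurd rfl hne
    · exact hy.1
  · intro hn
    by_cases hn1 : n = y + 1
    · exact Or.inr hn1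
    · exact Or.inl ⟨Or.inl ⟨hn, hn1⟩, fun h => hy.2 (h ▸ hn)⟩

lemma crossX (h0 : 0 ∉ S) (hx : x ∈ Xset S) (hxy : y ≠ x) :
    y ∈ Yset (addBox S x) ↔ (y ∈ Yset S ∧ y + 1 ≠ x ∧ y ≠ x + 1) := by
  rw [mem_Yset (zero_not_mem_addBox h0), mem_addBox h0 hx, mem_addBox h0 hx,
    mem_Yset h0]
  constructor
  · rintro ⟨⟨hy1, hy2⟩ | h, hy3⟩
    · refine ⟨⟨hy1, fun hyS => hy3 (Or.inl ⟨hyS, hxy⟩)⟩, hy2, fun h => hy3 (Or.inr h)⟩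
    · omega
  · rintro ⟨⟨h1, h2⟩, h3, h4⟩
    refine ⟨Or.inl ⟨h1, h3⟩, ?_⟩
    rintro (⟨hyS, _⟩ | h)
    · exact h2 hyS
    · exact h4 h

lemma crossY (h0 : 0 ∉ S) (hy : y ∈ Yset S) (hxy : x ≠ y) :
    x ∈ Xset (removeBox S y) ↔ (x ∈ Xset S ∧ y + 1 ≠ x ∧ y ≠ x + 1) := by
  have hy' := (mem_Yset h0).mp hy
  rw [mem_Xset, mem_removeBox h0 hy, mem_removeBox h0 hy, mem_Xset]
  constructor
  · rintro ⟨hA, hB⟩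
    have hx1S : x + 1 ∉ S := fun h => hB (Or.inl ⟨h, fun he => hxy (by omega)⟩)
    have hyx1 : y ≠ x + 1 := fun h => hB (Or.inr ⟨h.symm, by omega⟩)
    rcases hA with (⟨hxS, hxne⟩ | ⟨rfl, _⟩) | rfl
    · exact ⟨⟨Or.inl hxS, hx1S⟩, fun h => hxne h.symm, hyx1⟩
    · exact absurd rfl hxy
    · exact ⟨⟨Or.inr rfl, hx1S⟩, by omega, hyx1⟩
  · rintro ⟨⟨hxS | rfl, hx1⟩, h3, h4⟩
    · refine ⟨Or.inl (Or.inl ⟨hxS, fun h => h3 h.symm⟩), ?_⟩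
      rintro (⟨h, _⟩ | ⟨h, _⟩)
      · exact hx1 h
      · exact h4 h.symm
    · refine ⟨Or.inr rfl, ?_⟩
      rintro (⟨h, _⟩ | ⟨h, _⟩)
      · exact hx1 h
      · exact h4 h.symm

lemma removeBox_addBox_comm (h0 : 0 ∉ S) (hx : x ∈ Xset S) (hy : y ∈ Yset S)
    (h1 : y + 1 ≠ x) (h2 : y ≠ x + 1) :
    removeBox (addBox S x) y = addBox (removeBox S y) x := by
  have hxy : x ≠ y := XY_ne h0 hx hy
  have hyB : y ∈ Yset (addBox S x) := (crossX h0 hx (Ne.symm hxy)).mpr ⟨hy, h1, h2⟩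
  have hxR : x ∈ Xset (removeBox S y) := (crossY h0 hy hxy).mpr ⟨hx, h1, h2⟩
  ext n
  rw [mem_removeBox (zero_not_mem_addBox h0) hyB, mem_addBox h0 hx,
    mem_addBox (zero_not_mem_removeBox h0) hxR, mem_removeBox h0 hy]
  constructor
  · rintro (⟨⟨hn, hnx⟩ | hn1, hny1⟩ | ⟨hny, hy0⟩)
    · exact Or.inl ⟨Or.inl ⟨hn, hny1⟩, hnx⟩
    · exact Or.inr hn1
    · exact Or.inl ⟨Or.inr ⟨hny, hy0⟩, by omega⟩
  · rintro (⟨⟨hn, hny1⟩ | ⟨hny, hy0⟩, hnx⟩ | hn1)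
    · exact Or.inl ⟨Or.inl ⟨hn, hnx⟩, hny1⟩
    · exact Or.inr ⟨hny, hy0⟩
    · exact Or.inl ⟨Or.inr hn1, by omega⟩

lemma Xset_eq_filter (h0 : 0 ∉ S) {M : ℕ} (hM : ∀ a ∈ S, a < M) (hM0 : 0 < M) :
    Xset S = (range M).filter (fun n => (n ∈ S ∨ n = 0) ∧ n + 1 ∉ S) := by
  ext n
  rw [mem_Xset, mem_filter, mem_range]
  constructor
  · rintro ⟨hn | rfl, hone⟩
    · exact ⟨hM _ hn, Or.inl hn, hone⟩
    · exact ⟨hM0, Or.inr rfl, hone⟩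
  · tauto

lemma Yset_eq (h0 : 0 ∉ S) {M : ℕ} (hM : ∀ a ∈ S, a < M) :
    Yset S = (if 1 ∈ S then {0} else ∅)
      ∪ (range M).filter (fun n => n + 1 ∈ S ∧ n ∉ S ∧ n ≠ 0) := by
  ext n
  rw [mem_Yset h0, mem_union, mem_filter, mem_range]
  split_ifs with h1 <;> simp only [mem_singleton, notMem_empty, false_or]
  · constructor
    · rintro ⟨ha, hb⟩
      by_cases hn : n = 0
      · exact Or.inl hn
      · exact Or.inr ⟨by have := hM _ ha; omega, ha, hb, hn⟩
    · rintro (rfl | ⟨_, ha, hb, _⟩)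
      · exact ⟨h1, h0⟩
      · exact ⟨ha, hb⟩
  · constructor
    · rintro ⟨ha, hb⟩
      have hn : n ≠ 0 := fun h => h1 (by rw [h] at ha; exact ha)
      exact ⟨by have := hM _ ha; omega, ha, hb, hn⟩
    · rintro ⟨_, ha, hb, _⟩
      exact ⟨ha, hb⟩

lemma telescope (h0 : 0 ∉ S) (φ : ℕ → ℝ) :
    ∑ x ∈ Xset S, φ x - ∑ y ∈ Yset S, φ y
      = φ 0 - (if 1 ∈ S then φ 0 else 0) + ∑ a ∈ S, (φ a - φ (a - 1)) := by
  set M := wt S + 2 with hMdef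
  have hM : ∀ a ∈ S, a < M := by
    intro a ha
    have : a ≤ wt S := Finset.single_le_sum (fun i _ => Nat.zero_le i) ha
    omega
  have key : ∀ n ∈ range M,
      ((if (n ∈ S ∨ n = 0) ∧ n + 1 ∉ S then φ n else 0)
        - (if n + 1 ∈ S ∧ n ∉ S ∧ n ≠ 0 then φ n else 0))
      = ((if n ∈ S ∨ n = 0 then φ n else 0) - (if n + 1 ∈ S then φ n else 0)) := by
    intro n _
    by_cases h3 : n = 0
    · subst h3
      by_cases h2 : 1 ∈ S <;> simp [h0, h2]
    · by_cases hs1 : n ∈ S <;> by_cases hs2 : n + 1 ∈ S <;> simp [hs1, hs2, h3]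
  have e1 : ∑ n ∈ range M, (if n ∈ S ∨ n = 0 then φ n else 0) = φ 0 + ∑ a ∈ S, φ a := by
    have hmem : ∀ n : ℕ, (n ∈ S ∨ n = 0) ↔ n ∈ insert 0 S := by
      intro n; simp [mem_insert, or_comm]
    simp_rw [hmem]
    rw [Finset.sum_ite_mem, Finset.inter_eq_right.mpr ?sub, Finset.sum_insert h0]
    case sub =>
      intro n hn
      rw [mem_insert] at hn
      rw [mem_range]
      rcases hn with rfl | hn
      · omega
      · exact hM _ hn
  have e2 : ∑ n ∈ range M, (if n + 1 ∈ S then φ n else 0) = ∑ a ∈ S, φ (a - 1) := by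
    rw [← Finset.sum_filter]
    have himg : (range M).filter (fun n => n + 1 ∈ S) = S.image (fun a => a - 1) := by
      ext m
      simp only [mem_filter, mem_range, mem_image]
      constructor
      · rintro ⟨_, hm⟩
        exact ⟨m + 1, hm, by omega⟩
      · rintro ⟨a, ha, rfl⟩
        have ha0 : a ≠ 0 := fun h => h0 (h ▸ ha)
        have hsimp : a - 1 + 1 = a := by omega
        rw [hsimp]
        exact ⟨by have := hM _ ha; omega, ha⟩
    rw [himg, Finset.sum_image ?inj]
    case inj =>
      intro a ha b hb hab
      have ha0 : a ≠ 0 := fun h => h0 (h ▸ ha)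
      have hb0 : b ≠ 0 := fun h => h0 (h ▸ hb)
      simp only at hab
      omega
  have main : (∑ n ∈ range M, (if (n ∈ S ∨ n = 0) ∧ n + 1 ∉ S then φ n else 0))
      - (∑ n ∈ range M, (if n + 1 ∈ S ∧ n ∉ S ∧ n ≠ 0 then φ n else 0))
      = φ 0 + ∑ a ∈ S, (φ a - φ (a - 1)) := by
    rw [← Finset.sum_sub_distrib, Finset.sum_congr rfl key, Finset.sum_sub_distrib,
      e1, e2, Finset.sum_sub_distrib]
    ring
  rw [Xset_eq_filter h0 hM (by omega), Yset_eq h0 hM, Finset.sum_union ?disj]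
  case disj =>
    split_ifs
    · rw [Finset.disjoint_left]
      intro n hn
      rw [mem_singleton] at hn
      subst hn
      simp
    · simp
  rw [Finset.sum_filter, Finset.sum_filter]
  have hsing : (∑ y ∈ (if 1 ∈ S then ({0} : Finset ℕ) else ∅), φ y)
      = (if 1 ∈ S then φ 0 else 0) := by
    split_ifs <;> simp
  rw [hsing]
  linarith [main]


lemma scalar_identity (h0 : 0 ∉ S) (α : ℝ) :
    (∑ x ∈ Xset S, (if x = 0 then (2:ℝ)⁻¹ else 1) * (cc x + α))
      - (∑ y ∈ Yset S, (if y = 0 then (2:ℝ)⁻¹ else 1) * (cc y + α))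
      = α / 2 + 2 * (wt S : ℝ) := by
  have hw : ∀ (t : Finset ℕ), (∑ x ∈ t, (if x = 0 then (2:ℝ)⁻¹ else 1) * (cc x + α))
      = (∑ x ∈ t, (cc x + α)) - (if 0 ∈ t then (cc 0 + α)/2 else 0) := by
    intro t
    have hx : ∀ x : ℕ, (if x = 0 then (2:ℝ)⁻¹ else 1) * (cc x + α)
        = (cc x + α) - (if x = 0 then (cc 0 + α)/2 else 0) := by
      intro x
      split_ifs with h
      · subst h; ring
      · ring
    simp_rw [hx]
    rw [Finset.sum_sub_distrib, Finset.sum_ite_eq' t 0 (fun _ => (cc 0 + α)/2)]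
  rw [hw, hw]
  have htel : ∑ x ∈ Xset S, (cc x + α) - ∑ y ∈ Yset S, (cc y + α)
      = (cc 0 + α) - (if 1 ∈ S then (cc 0 + α) else 0)
        + ∑ a ∈ S, ((cc a + α) - (cc (a - 1) + α)) :=
    telescope h0 (fun n => cc n + α)
  have hdiff : ∑ a ∈ S, ((cc a + α) - (cc (a - 1) + α)) = 2 * (wt S : ℝ) := by
    have hterm : ∀ a ∈ S, (cc a + α) - (cc (a - 1) + α) = 2 * (a : ℝ) := by
      intro a ha
      have ha0 : a ≠ 0 := fun h => h0 (h ▸ ha)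
      have h1 : ((a - 1 : ℕ) : ℝ) = (a : ℝ) - 1 := by
        have hle : 1 ≤ a := by omega
        push_cast [hle]
        ring
      unfold cc
      rw [h1]
      ring
    rw [Finset.sum_congr rfl hterm, ← Finset.mul_sum]
    unfold wt
    push_cast
    ring
  have hcc0 : cc 0 = 0 := by unfold cc; norm_num
  have h0X : (0 ∈ Xset S) ↔ 1 ∉ S := by rw [mem_Xset]; simp
  have h0Y : (0 ∈ Yset S) ↔ 1 ∈ S := by rw [mem_Yset h0]; simp [h0]
  by_cases h1 : 1 ∈ S
  · rw [if_neg (fun h => (h0X.mp h) h1), if_pos (h0Y.mpr h1), if_pos h1] at *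
    linarith
  · rw [if_pos (h0X.mpr h1), if_neg (fun h => h1 (h0Y.mp h)), if_neg h1] at *
    linarith

noncomputable def Elm (α : ℝ) : (SP →₀ ℝ) →ₗ[ℝ] (SP →₀ ℝ) :=
  Finsupp.lsum ℝ fun lam => LinearMap.toSpanSingleton ℝ (SP →₀ ℝ) (Evec α lam)
noncomputable def Flm : (SP →₀ ℝ) →ₗ[ℝ] (SP →₀ ℝ) :=
  Finsupp.lsum ℝ fun lam => LinearMap.toSpanSingleton ℝ (SP →₀ ℝ) (Fvec lam)
noncomputable def Hlm (α : ℝ) : (SP →₀ ℝ) →ₗ[ℝ] (SP →₀ ℝ) :=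
  Finsupp.lsum ℝ fun lam => LinearMap.toSpanSingleton ℝ (SP →₀ ℝ) (Hvec α lam)

lemma Eop_eq (α : ℝ) (f : SP →₀ ℝ) : Eop α f = Elm α f := rfl
lemma Fop_eq (f : SP →₀ ℝ) : Fop f = Flm f := rfl
lemma Hop_eq (α : ℝ) (f : SP →₀ ℝ) : Hop α f = Hlm α f := rfl

lemma Elm_single (α : ℝ) (lam : SP) (r : ℝ) :
    Elm α (Finsupp.single lam r) = r • Evec α lam := by
  simp [Elm, Finsupp.lsum_single]
lemma Flm_single (lam : SP) (r : ℝ) :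
    Flm (Finsupp.single lam r) = r • Fvec lam := by
  simp [Flm, Finsupp.lsum_single]
lemma Hlm_single (α : ℝ) (lam : SP) (r : ℝ) :
    Hlm α (Finsupp.single lam r) = r • Hvec α lam := by
  simp [Hlm, Finsupp.lsum_single]

lemma Hlm_Evec (α : ℝ) (lam : SP) :
    Hlm α (Evec α lam) = ((α / 2 + 2 * (wt lam.1 : ℝ)) + 2) • Evec α lam := by
  unfold Evec
  rw [map_sum, Finset.smul_sum]
  refine Finset.sum_congr rfl fun x hx => ?_
  have hwt : (wt ((addBoxSP lam x).1) : ℝ) = (wt lam.1 : ℝ) + 1 := by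
    have h := wt_addBox lam.2 hx
    show (wt (addBox lam.1 x) : ℝ) = _
    rw [h]
    push_cast
    ring
  rw [map_smul, Hlm_single, one_smul, Hvec, hwt, smul_smul, Finsupp.smul_single,
    Finsupp.smul_single, smul_eq_mul, smul_eq_mul, mul_one]
  congr 1
  ring

lemma Hlm_Fvec (α : ℝ) (lam : SP) :
    Hlm α (Fvec lam) = ((α / 2 + 2 * (wt lam.1 : ℝ)) - 2) • Fvec lam := by
  unfold Fvec
  rw [map_neg, map_sum, smul_neg, Finset.smul_sum]
  congr 1
  refine Finset.sum_congr rfl fun y hy => ?_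
  have hwt : (wt ((removeBoxSP lam y).1) : ℝ) + 1 = (wt lam.1 : ℝ) := by
    exact_mod_cast congrArg (Nat.cast : ℕ → ℝ) (wt_removeBox lam.2 hy)
  rw [Hlm_single, one_smul, Hvec, Finsupp.smul_single, smul_eq_mul, mul_one]
  congr 1
  linarith

lemma EHlm (α : ℝ) : Elm α ∘ₗ Hlm α - Hlm α ∘ₗ Elm α = (-2 : ℝ) • Elm α := by
  apply Finsupp.lhom_ext
  intro lam r
  simp only [LinearMap.sub_apply, LinearMap.comp_apply, LinearMap.smul_apply,
    Hlm_single, Elm_single, map_smul, Hlm_Evec]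
  rw [Hvec, Elm_single]
  rw [smul_smul, smul_smul, smul_smul, ← sub_smul]
  congr 1
  ring

lemma FHlm (α : ℝ) : Flm ∘ₗ Hlm α - Hlm α ∘ₗ Flm = (2 : ℝ) • Flm := by
  apply Finsupp.lhom_ext
  intro lam r
  simp only [LinearMap.sub_apply, LinearMap.comp_apply, LinearMap.smul_apply,
    Hlm_single, Flm_single, map_smul, Hlm_Fvec]
  rw [Hvec, Flm_single]
  rw [smul_smul, smul_smul, smul_smul, ← sub_smul]
  congr 1
  ring

lemma EFlm_single (α : ℝ) (lam : SP) :
    Elm α (Fvec lam) - Flm (Evec α lam) = Hvec α lam := by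
  have hE : Elm α (Fvec lam)
      = -∑ y ∈ Yset lam.1, ∑ x ∈ Xset ((removeBoxSP lam y).1),
          ((if x = 0 then (2:ℝ)⁻¹ else 1) * (cc x + α)) •
            Finsupp.single (addBoxSP (removeBoxSP lam y) x) (1:ℝ) := by
    rw [Fvec, map_neg, map_sum]
    congr 1
    refine Finset.sum_congr rfl fun y hy => ?_
    rw [Elm_single, one_smul, Evec]
  have hF : Flm (Evec α lam)
      = -∑ x ∈ Xset lam.1, ∑ y ∈ Yset ((addBoxSP lam x).1),
          ((if x = 0 then (2:ℝ)⁻¹ else 1) * (cc x + α)) •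
            Finsupp.single (removeBoxSP (addBoxSP lam x) y) (1:ℝ) := by
    rw [Evec, map_sum, ← Finset.sum_neg_distrib]
    refine Finset.sum_congr rfl fun x hx => ?_
    rw [map_smul, Flm_single, one_smul, Fvec, smul_neg, Finset.smul_sum]
  have hdiagB : ∀ x ∈ Xset lam.1,
      (∑ y ∈ Yset ((addBoxSP lam x).1),
          ((if x = 0 then (2:ℝ)⁻¹ else 1) * (cc x + α)) •
            Finsupp.single (removeBoxSP (addBoxSP lam x) y) (1:ℝ))
      = (∑ y ∈ (Yset ((addBoxSP lam x).1)).erase x,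
          ((if x = 0 then (2:ℝ)⁻¹ else 1) * (cc x + α)) •
            Finsupp.single (removeBoxSP (addBoxSP lam x) y) (1:ℝ))
        + ((if x = 0 then (2:ℝ)⁻¹ else 1) * (cc x + α)) • Finsupp.single lam (1:ℝ) := by
    intro x hx
    have hmem : x ∈ Yset ((addBoxSP lam x).1) := self_mem_Yset_addBox lam.2 hx
    rw [← Finset.sum_erase_add _ _ hmem]
    congr 2
    exact congrArg (fun t => Finsupp.single t (1:ℝ))
      (Subtype.ext (removeBox_addBox lam.2 hx))
  have hdiagA : ∀ y ∈ Yset lam.1,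
      (∑ x ∈ Xset ((removeBoxSP lam y).1),
          ((if x = 0 then (2:ℝ)⁻¹ else 1) * (cc x + α)) •
            Finsupp.single (addBoxSP (removeBoxSP lam y) x) (1:ℝ))
      = (∑ x ∈ (Xset ((removeBoxSP lam y).1)).erase y,
          ((if x = 0 then (2:ℝ)⁻¹ else 1) * (cc x + α)) •
            Finsupp.single (addBoxSP (removeBoxSP lam y) x) (1:ℝ))
        + ((if y = 0 then (2:ℝ)⁻¹ else 1) * (cc y + α)) • Finsupp.single lam (1:ℝ) := by
    intro y hy
    have hmem : y ∈ Xset ((removeBoxSP lam y).1) := self_mem_Xset_removeBox lam.2 hy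
    rw [← Finset.sum_erase_add _ _ hmem]
    congr 2
    exact congrArg (fun t => Finsupp.single t (1:ℝ))
      (Subtype.ext (addBox_removeBox lam.2 hy))
  have hcross :
      (∑ x ∈ Xset lam.1, ∑ y ∈ (Yset ((addBoxSP lam x).1)).erase x,
          ((if x = 0 then (2:ℝ)⁻¹ else 1) * (cc x + α)) •
            Finsupp.single (removeBoxSP (addBoxSP lam x) y) (1:ℝ))
      = (∑ y ∈ Yset lam.1, ∑ x ∈ (Xset ((removeBoxSP lam y).1)).erase y,
          ((if x = 0 then (2:ℝ)⁻¹ else 1) * (cc x + α)) •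
            Finsupp.single (addBoxSP (removeBoxSP lam y) x) (1:ℝ)) := by
    rw [Finset.sum_sigma', Finset.sum_sigma']
    refine Finset.sum_nbij' (fun p => ⟨p.2, p.1⟩) (fun p => ⟨p.2, p.1⟩)
      ?_ ?_ ?_ ?_ ?_
    · rintro ⟨x, y⟩ hp
      rw [Finset.mem_sigma, Finset.mem_erase] at hp
      obtain ⟨hx, hne, hyB⟩ := hp
      have hcx := (crossX lam.2 hx hne).mp hyB
      rw [Finset.mem_sigma, Finset.mem_erase]
      exact ⟨hcx.1, (XY_ne lam.2 hx hcx.1),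
        (crossY lam.2 hcx.1 (XY_ne lam.2 hx hcx.1)).mpr ⟨hx, hcx.2.1, hcx.2.2⟩⟩
    · rintro ⟨y, x⟩ hq
      rw [Finset.mem_sigma, Finset.mem_erase] at hq
      obtain ⟨hy, hne, hxR⟩ := hq
      have hcy := (crossY lam.2 hy hne).mp hxR
      rw [Finset.mem_sigma, Finset.mem_erase]
      exact ⟨hcy.1, (XY_ne lam.2 hcy.1 hy).symm,
        (crossX lam.2 hcy.1 (XY_ne lam.2 hcy.1 hy).symm).mpr ⟨hy, hcy.2.1, hcy.2.2⟩⟩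
    · rintro ⟨x, y⟩ _
      rfl
    · rintro ⟨y, x⟩ _
      rfl
    · rintro ⟨x, y⟩ hp
      rw [Finset.mem_sigma, Finset.mem_erase] at hp
      obtain ⟨hx, hne, hyB⟩ := hp
      have hcx := (crossX lam.2 hx hne).mp hyB
      have hcomm := removeBox_addBox_comm lam.2 hx hcx.1 hcx.2.1 hcx.2.2
      exact congrArg _ (congrArg (fun t => Finsupp.single t (1:ℝ)) (Subtype.ext hcomm))
  have hdiag :
      (∑ x ∈ Xset lam.1,
          ((if x = 0 then (2:ℝ)⁻¹ else 1) * (cc x + α)) • Finsupp.single lam (1:ℝ))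
      - (∑ y ∈ Yset lam.1,
          ((if y = 0 then (2:ℝ)⁻¹ else 1) * (cc y + α)) • Finsupp.single lam (1:ℝ))
      = Hvec α lam := by
    rw [← Finset.sum_smul, ← Finset.sum_smul, ← sub_smul, scalar_identity lam.2 α,
      Hvec, Finsupp.smul_single, smul_eq_mul, mul_one]
  rw [hE, hF, Finset.sum_congr rfl hdiagA, Finset.sum_congr rfl hdiagB,
    Finset.sum_add_distrib, Finset.sum_add_distrib, hcross, ← hdiag]
  abel

lemma EFlm (α : ℝ) : Elm α ∘ₗ Flm - Flm ∘ₗ Elm α = Hlm α := by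
  apply Finsupp.lhom_ext
  intro lam r
  simp only [LinearMap.sub_apply, LinearMap.comp_apply, Flm_single, Elm_single,
    map_smul, Hlm_single]
  rw [← smul_sub, EFlm_single]

/-- **Lemma 2.4.** For every real `α`, the Kerov-type operators `E`, `F`, `H` on the
space of finitely supported functions on strict partitions satisfy the `sl(2)`
commutation relations `[E,H] = −2E`, `[F,H] = 2F`, `[E,F] = H`. -/
theorem kerov_operators_sl2 (α : ℝ) :
    (∀ f : SP →₀ ℝ, Eop α (Hop α f) - Hop α (Eop α f) = (-2 : ℝ) • Eop α f) ∧
    (∀ f : SP →₀ ℝ, Fop (Hop α f) - Hop α (Fop f) = (2 : ℝ) • Fop f) ∧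
    (∀ f : SP →₀ ℝ, Eop α (Fop f) - Fop (Eop α f) = Hop α f) := by
  refine ⟨fun f => ?_, fun f => ?_, fun f => ?_⟩
  · have h := LinearMap.congr_fun (EHlm α) f
    simp only [LinearMap.sub_apply, LinearMap.comp_apply, LinearMap.smul_apply] at h
    simp only [Eop_eq, Hop_eq]
    exact h
  · have h := LinearMap.congr_fun (FHlm α) f
    simp only [LinearMap.sub_apply, LinearMap.comp_apply, LinearMap.smul_apply] at h
    simp only [Eop_eq, Fop_eq, Hop_eq]
    exact h
  · have h := LinearMap.congr_fun (EFlm α) f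
    simp only [LinearMap.sub_apply, LinearMap.comp_apply] at h
    simp only [Eop_eq, Fop_eq, Hop_eq]
    exact h
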